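/- Let $b^{(1)}:\mathbb{R}^d\to\mathbb{R}^d$ satisfy, for some $\vartheta> 0$ and $\kappa_0,\kappa_1,\kappa_2>0$, $\frac{\langle x,b^{(1)}(x)\rangle}{\sqrt{1+|x|^2}}\le-\kappa_0|x|^\vartheta+\kappa_1$ and $|b^{(1)}(x)|\le\kappa_2(1+|x|^\vartheta)$. Let $u:\mathbb{R}^d\to\mathbb{R}^d$ be $C^1$ with $\|u\|_\infty<\infty$, set $\Phi(x)=x+u(x)$, assume $\Phi$ is a diffeomorphism with $\tfrac12|x-y|\le|\Phi(x)-\Phi(y)|\le2|x-y|$, and define for $\lambda>0$, $\tilde b(y):=(\lambda u+b^{(1)}\cdot\nabla\Phi)(\Phi^{-1}(y))$. Then if $\|\nabla u\|_\infty$ is sufficiently small (depending on $\kappa_0,\kappa_1,\kappa_2,\vartheta$), there exist $\tilde\kappa_0,\tilde\kappa_1,\tilde\kappa_2>0$ such that for all $y$: $\frac{\langle y,\tilde b(y)\rangle}{\sqrt{1+|y|^2}}\le-\tilde\kappa_0|y|^\vartheta+\tilde\kappa_1$ and $|\tilde b(y)|\le\tilde\kappa_2(1+|y|^\vartheta)$.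 -/

import Mathlib

open scoped RealInnerProductSpace

lemma sqrt_facts (m : ℝ) (hm : 0 ≤ m) :
    1 ≤ Real.sqrt (1+m^2) ∧ m ≤ Real.sqrt (1+m^2) ∧ Real.sqrt (1+m^2) ≤ 1 + m ∧
    1 + m ≤ Real.sqrt 2 * Real.sqrt (1+m^2) := by
  have h0 : (0:ℝ) ≤ 1 + m^2 := by positivity
  have hs := Real.sq_sqrt h0
  have hsn := Real.sqrt_nonneg (1+m^2)
  have h2 := Real.sq_sqrt (by norm_num : (0:ℝ) ≤ 2)
  have h2n := Real.sqrt_nonneg 2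
  refine ⟨?_, ?_, ?_, ?_⟩ <;>
    nlinarith [sq_nonneg (Real.sqrt (1+m^2) - 1), sq_nonneg (Real.sqrt (1+m^2) - m),
      sq_nonneg (Real.sqrt 2 * Real.sqrt (1+m^2) - (1+m)), sq_nonneg (m-1),
      mul_nonneg h2n hsn]

lemma rpow_add_le_aux {a b ϑ : ℝ} (ha : 0 ≤ a) (hb : 0 ≤ b) (hϑ : 0 ≤ ϑ) :
    (a+b)^ϑ ≤ 2^ϑ * (a^ϑ + b^ϑ) := by
  have h1 : a + b ≤ 2 * max a b := by
    rcases le_total a b with h | h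
    · rw [max_eq_right h]; linarith
    · rw [max_eq_left h]; linarith
  have h2 : (max a b)^ϑ ≤ a^ϑ + b^ϑ := by
    rcases le_total a b with h | h
    · rw [max_eq_right h]; nlinarith [Real.rpow_nonneg ha ϑ]
    · rw [max_eq_left h]; nlinarith [Real.rpow_nonneg hb ϑ]
  calc (a+b)^ϑ ≤ (2*max a b)^ϑ := Real.rpow_le_rpow (by positivity) h1 hϑ
    _ = 2^ϑ * (max a b)^ϑ := Real.mul_rpow (by norm_num) (le_max_of_le_left ha)
    _ ≤ 2^ϑ * (a^ϑ + b^ϑ) := by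
        have := Real.rpow_pos_of_pos (show (0:ℝ) < 2 by norm_num) ϑ
        nlinarith

set_option maxHeartbeats 2000000 in
/-- Pure real-arithmetic core of the dissipativity estimate. -/
lemma key_inner (ϑ κ₀ κ₁ κ₂ ε lam Cu n m Sx Sy I1 I2 I3 I4 : ℝ)
    (hϑ0 : 0 ≤ ϑ) (hκ₀ : 0 < κ₀) (hκ₁ : 0 < κ₁) (hκ₂ : 0 < κ₂)
    (hlam : 0 < lam) (hCu0 : 0 ≤ Cu) (hε0 : 0 < ε) (hεκ : ε * κ₂ ≤ κ₀ / 4)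
    (hn0 : 0 ≤ n) (hm0 : 0 ≤ m)
    (hSx1 : 1 ≤ Sx) (hnSx : n ≤ Sx) (hSxn : Sx ≤ 1 + n)
    (hSy1 : 1 ≤ Sy) (hmSy : m ≤ Sy) (hSym : Sy ≤ 1 + m)
    (hSx2 : 1 + n ≤ Real.sqrt 2 * Sx) (hSy2 : 1 + m ≤ Real.sqrt 2 * Sy)
    (hmn : m ≤ n + Cu) (hnm : n ≤ m + Cu)
    (hmθn : m ^ ϑ ≤ 2 ^ ϑ * (n ^ ϑ + Cu ^ ϑ))
    (hnθ : 0 ≤ n ^ ϑ) (hmθ : 0 ≤ m ^ ϑ) (hCup : 0 ≤ Cu ^ ϑ)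
    (hI1 : I1 ≤ Sy * Cu) (hI2 : I2 ≤ (-κ₀ * n ^ ϑ + κ₁) * Sx)
    (hI3 : I3 ≤ Cu * (κ₂ * (1 + n ^ ϑ))) (hI4 : I4 ≤ Sy * (ε * (κ₂ * (1 + n ^ ϑ)))) :
    lam * I1 + (I2 + I3) + I4 ≤
      (-(κ₀ / (8 * 2 ^ ϑ)) * m ^ ϑ +
        (lam * Cu + Real.sqrt 2 * κ₁ * (1 + Cu) + Cu * κ₂ + κ₀ / 4
          + (3 * κ₀ / 8 + Cu * κ₂) * (2 * Cu + 4 * Cu * κ₂ / κ₀ + 1) ^ ϑ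
          + (κ₀ / 8) * Cu ^ ϑ + 1)) * Sy := by
  have h2p : (0:ℝ) < (2:ℝ) ^ ϑ := Real.rpow_pos_of_pos (by norm_num) ϑ
  set T : ℝ := 2 * Cu + 4 * Cu * κ₂ / κ₀ + 1 with hTdef
  have hT0 : 0 < T := by positivity
  have hTp : (0:ℝ) ≤ T ^ ϑ := Real.rpow_nonneg hT0.le ϑ
  have hSy0 : 0 < Sy := lt_of_lt_of_le one_pos hSy1
  have hSx0 : 0 < Sx := lt_of_lt_of_le one_pos hSx1
  have hcore : -κ₀ * Sx * n ^ ϑ + Cu * κ₂ * n ^ ϑ + Sy * (ε * κ₂) * n ^ ϑ ≤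
      Sy * (-(κ₀ / 8) * n ^ ϑ + (3 * κ₀ / 8 + Cu * κ₂) * T ^ ϑ) := by
    rcases le_total n T with hcase | hcase
    · have hnT : n ^ ϑ ≤ T ^ ϑ := Real.rpow_le_rpow hn0 hcase hϑ0
      have e1 : Cu * κ₂ * n ^ ϑ ≤ Sy * (Cu * κ₂ * T ^ ϑ) := by
        have p1 : Cu * κ₂ * n ^ ϑ ≤ Cu * κ₂ * T ^ ϑ :=
          mul_le_mul_of_nonneg_left hnT (by positivity)
        have p2 : Cu * κ₂ * T ^ ϑ ≤ Sy * (Cu * κ₂ * T ^ ϑ) :=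
          le_mul_of_one_le_left (mul_nonneg (mul_nonneg hCu0 hκ₂.le) hTp) hSy1
        linarith
      have e2 : Sy * (ε * κ₂) * n ^ ϑ ≤ Sy * ((κ₀ / 4) * T ^ ϑ) := by
        have := mul_le_mul_of_nonneg_left
          (mul_le_mul hεκ hnT hnθ (by linarith : (0:ℝ) ≤ κ₀ / 4)) hSy0.le
        linarith [this]
      have e3 : Sy * (-(κ₀ / 8) * T ^ ϑ) ≤ Sy * (-(κ₀ / 8) * n ^ ϑ) := by
        have p1 : κ₀ / 8 * n ^ ϑ ≤ κ₀ / 8 * T ^ ϑ :=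
          mul_le_mul_of_nonneg_left hnT (by linarith)
        have : -(κ₀ / 8) * T ^ ϑ ≤ -(κ₀ / 8) * n ^ ϑ := by linarith
        exact mul_le_mul_of_nonneg_left this hSy0.le
      linarith [mul_nonneg (mul_nonneg hκ₀.le hSx0.le) hnθ, e1, e2, e3]
    · have hSxT : T ≤ Sx := le_trans hcase hnSx
      have hA : Cu * κ₂ ≤ κ₀ / 4 * Sx := by
        have hTb : 4 * Cu * κ₂ / κ₀ ≤ T := by
          rw [hTdef]
          have : (0:ℝ) ≤ 2 * Cu := by linarith
          linarith
        have hSb : 4 * Cu * κ₂ / κ₀ ≤ Sx := le_trans hTb hSxT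
        calc Cu * κ₂ = κ₀ / 4 * (4 * Cu * κ₂ / κ₀) := by field_simp
          _ ≤ κ₀ / 4 * Sx := mul_le_mul_of_nonneg_left hSb (by linarith)
      have hCuSx : Cu ≤ Sx / 2 := by
        have hTb : 2 * Cu ≤ T := by
          rw [hTdef]
          have : (0:ℝ) ≤ 4 * Cu * κ₂ / κ₀ := by positivity
          linarith
        linarith
      have hs2 : Real.sqrt 2 ≤ 1.5 := by
        nlinarith [Real.sq_sqrt (show (0:ℝ) ≤ 2 by norm_num), Real.sqrt_nonneg 2]
      have hB : Sy ≤ 2 * Sx := by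
        have q1 : (Real.sqrt 2 - 1.5) * Sx ≤ 0 :=
          mul_nonpos_of_nonpos_of_nonneg (by linarith) hSx0.le
        nlinarith [q1]
      have hpos : (0:ℝ) ≤ Sy * ((3 * κ₀ / 8 + Cu * κ₂) * T ^ ϑ) :=
        mul_nonneg hSy0.le (mul_nonneg (by positivity) hTp)
      linarith [mul_le_mul_of_nonneg_right hA hnθ,
        mul_le_mul_of_nonneg_right hB (mul_nonneg (by linarith : (0:ℝ) ≤ 3 * κ₀ / 8) hnθ),
        mul_le_mul_of_nonneg_right hεκ (mul_nonneg hSy0.le hnθ), hpos]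
  have hk1 : κ₁ * Sx ≤ Sy * (Real.sqrt 2 * κ₁ * (1 + Cu)) := by
    have h2n := Real.sqrt_nonneg 2
    have hc : Sx ≤ Real.sqrt 2 * (1 + Cu) * Sy := by
      have h3' : 1 + m + Cu ≤ (1 + Cu) * (1 + m) := by nlinarith [mul_nonneg hCu0 hm0]
      have h4' : (1 + Cu) * (1 + m) ≤ (1 + Cu) * (Real.sqrt 2 * Sy) :=
        mul_le_mul_of_nonneg_left hSy2 (by linarith)
      nlinarith [h3', h4', hnm, hSxn]
    have := mul_le_mul_of_nonneg_left hc hκ₁.le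
    nlinarith [this]
  have hD : (κ₀ / (8 * 2 ^ ϑ)) * m ^ ϑ ≤ (κ₀ / 8) * n ^ ϑ + (κ₀ / 8) * Cu ^ ϑ := by
    have hh := mul_le_mul_of_nonneg_left hmθn
      (le_of_lt (by positivity : (0:ℝ) < κ₀ / (8 * 2 ^ ϑ)))
    calc (κ₀ / (8 * 2 ^ ϑ)) * m ^ ϑ ≤ (κ₀ / (8 * 2 ^ ϑ)) * (2 ^ ϑ * (n ^ ϑ + Cu ^ ϑ)) := hh
      _ = (κ₀ / 8) * n ^ ϑ + (κ₀ / 8) * Cu ^ ϑ := by field_simp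
  have e1 : Cu * κ₂ ≤ Sy * (Cu * κ₂) := by
    nlinarith [mul_nonneg (sub_nonneg.mpr hSy1) (mul_nonneg hCu0 hκ₂.le)]
  have e2 : Sy * (ε * κ₂) ≤ Sy * (κ₀ / 4) := mul_le_mul_of_nonneg_left hεκ hSy0.le
  have e3 : Sy * ((κ₀ / (8 * 2 ^ ϑ)) * m ^ ϑ) ≤ Sy * ((κ₀ / 8) * n ^ ϑ + (κ₀ / 8) * Cu ^ ϑ) :=
    mul_le_mul_of_nonneg_left hD hSy0.le
  calc lam * I1 + (I2 + I3) + I4 ≤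
      lam * (Sy * Cu) + ((-κ₀ * n ^ ϑ + κ₁) * Sx + Cu * (κ₂ * (1 + n ^ ϑ)))
        + Sy * (ε * (κ₂ * (1 + n ^ ϑ))) :=
      add_le_add (add_le_add (mul_le_mul_of_nonneg_left hI1 hlam.le) (add_le_add hI2 hI3)) hI4
    _ ≤ _ := by nlinarith [hcore, hk1, e1, e2, e3, hSy0.le,
        mul_nonneg (mul_nonneg hlam.le hSy0.le) hCu0]

set_option maxHeartbeats 2000000 in
/-- Pure real-arithmetic core of the growth estimate. -/
lemma key_norm (ϑ κ₂ ε lam Cu n m N : ℝ)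
    (hϑ0 : 0 ≤ ϑ) (hκ₂ : 0 < κ₂) (hlam : 0 < lam) (hCu0 : 0 ≤ Cu)
    (hε0 : 0 < ε) (hε1 : ε ≤ 1) (hn0 : 0 ≤ n) (hm0 : 0 ≤ m)
    (hnθm : n ^ ϑ ≤ 2 ^ ϑ * (m ^ ϑ + Cu ^ ϑ))
    (hnθ : 0 ≤ n ^ ϑ) (hmθ : 0 ≤ m ^ ϑ) (hCup : 0 ≤ Cu ^ ϑ)
    (hN : N ≤ lam * Cu + (κ₂ * (1 + n ^ ϑ) + ε * (κ₂ * (1 + n ^ ϑ)))) :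
    N ≤ (lam * Cu + 2 * κ₂ + 2 * κ₂ * 2 ^ ϑ * (1 + Cu ^ ϑ) + 1) * (1 + m ^ ϑ) := by
  have h2p : (0:ℝ) < (2:ℝ) ^ ϑ := Real.rpow_pos_of_pos (by norm_num) ϑ
  have key : 2 * κ₂ * n ^ ϑ ≤ 2 * κ₂ * (2 ^ ϑ * (m ^ ϑ + Cu ^ ϑ)) :=
    mul_le_mul_of_nonneg_left hnθm (by positivity)
  have hεb : ε * (κ₂ * (1 + n ^ ϑ)) ≤ κ₂ * (1 + n ^ ϑ) := by
    have := mul_le_mul_of_nonneg_right hε1 (show (0:ℝ) ≤ κ₂ * (1 + n ^ ϑ) by positivity)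
    linarith
  nlinarith [key, hεb, mul_nonneg (mul_nonneg hlam.le hCu0) hmθ,
    mul_nonneg hκ₂.le hmθ,
    mul_nonneg (mul_nonneg (mul_nonneg hκ₂.le h2p.le) hCup) hmθ]

set_option maxHeartbeats 2000000 in
/-- Preservation of the dissipativity structure of the drift under Zvonkin's transformation
Φ = id + u, provided ‖∇u‖_∞ is small enough (depending only on κ₀, κ₁, κ₂, ϑ). -/
theorem dissipativity_preserved (d : ℕ) (ϑ κ₀ κ₁ κ₂ : ℝ)
    (hϑ : 0 < ϑ) (hκ₀ : 0 < κ₀) (hκ₁ : 0 < κ₁) (hκ₂ : 0 < κ₂) :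
    ∃ ε > (0 : ℝ),
      ∀ (b1 u Ψ : EuclideanSpace ℝ (Fin d) → EuclideanSpace ℝ (Fin d)) (lam : ℝ),
        0 < lam →
        (∀ x, ⟪x, b1 x⟫ / Real.sqrt (1 + ‖x‖ ^ 2) ≤ -κ₀ * ‖x‖ ^ ϑ + κ₁) →
        (∀ x, ‖b1 x‖ ≤ κ₂ * (1 + ‖x‖ ^ ϑ)) →
        ContDiff ℝ 1 u → (∃ Cu : ℝ, ∀ x, ‖u x‖ ≤ Cu) →
        (∀ x, ‖fderiv ℝ u x‖ ≤ ε) →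
        Function.LeftInverse Ψ (fun x => x + u x) →
        Function.RightInverse Ψ (fun x => x + u x) →
        (∀ x y, (1 / 2) * ‖x - y‖ ≤ ‖(x + u x) - (y + u y)‖ ∧
          ‖(x + u x) - (y + u y)‖ ≤ 2 * ‖x - y‖) →
        ∃ κ₀' > (0 : ℝ), ∃ κ₁' > (0 : ℝ), ∃ κ₂' > (0 : ℝ), ∀ y,
          ⟪y, lam • u (Ψ y) + fderiv ℝ (fun x => x + u x) (Ψ y) (b1 (Ψ y))⟫ /
              Real.sqrt (1 + ‖y‖ ^ 2) ≤ -κ₀' * ‖y‖ ^ ϑ + κ₁' ∧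
          ‖lam • u (Ψ y) + fderiv ℝ (fun x => x + u x) (Ψ y) (b1 (Ψ y))‖ ≤
            κ₂' * (1 + ‖y‖ ^ ϑ) := by
  refine ⟨min 1 (κ₀ / (4 * κ₂)), by positivity, ?_⟩
  set ε := min 1 (κ₀ / (4 * κ₂)) with hεdef
  have hε0 : 0 < ε := by positivity
  have hε1 : ε ≤ 1 := min_le_left _ _
  have hεκ : ε * κ₂ ≤ κ₀ / 4 := by
    have h := min_le_right 1 (κ₀ / (4 * κ₂))
    calc ε * κ₂ ≤ (κ₀ / (4 * κ₂)) * κ₂ := by nlinarith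
      _ = κ₀ / 4 := by field_simp
  clear_value ε
  intro b1 u Ψ lam hlam hb1 hb2 hu hCuEx hDu hΨl hΨr hbil
  obtain ⟨Cu, hCu⟩ := hCuEx
  have hCu0 : 0 ≤ Cu := le_trans (norm_nonneg _) (hCu 0)
  have hud : Differentiable ℝ u := hu.differentiable one_ne_zero
  have hϑ0 : (0:ℝ) ≤ ϑ := hϑ.le
  have hT0 : (0:ℝ) < 2 * Cu + 4 * Cu * κ₂ / κ₀ + 1 := by positivity
  have hCup : (0:ℝ) ≤ Cu ^ ϑ := Real.rpow_nonneg hCu0 ϑ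
  refine ⟨κ₀ / (8 * 2 ^ ϑ), by positivity,
    lam * Cu + Real.sqrt 2 * κ₁ * (1 + Cu) + Cu * κ₂ + κ₀ / 4
      + (3 * κ₀ / 8 + Cu * κ₂) * (2 * Cu + 4 * Cu * κ₂ / κ₀ + 1) ^ ϑ
      + (κ₀ / 8) * Cu ^ ϑ + 1,
    by positivity,
    lam * Cu + 2 * κ₂ + 2 * κ₂ * 2 ^ ϑ * (1 + Cu ^ ϑ) + 1, by positivity, ?_⟩
  intro y
  have hy : Ψ y + u (Ψ y) = y := hΨr y
  set x := Ψ y with hxdef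
  have hn0 : (0:ℝ) ≤ ‖x‖ := norm_nonneg _
  have hm0 : (0:ℝ) ≤ ‖y‖ := norm_nonneg _
  have hnθ : (0:ℝ) ≤ ‖x‖ ^ ϑ := Real.rpow_nonneg hn0 ϑ
  have hmθ : (0:ℝ) ≤ ‖y‖ ^ ϑ := Real.rpow_nonneg hm0 ϑ
  obtain ⟨hSx1, hnSx, hSxn, hSx2⟩ := sqrt_facts ‖x‖ hn0
  obtain ⟨hSy1, hmSy, hSym, hSy2⟩ := sqrt_facts ‖y‖ hm0
  have hSy0 : (0:ℝ) < Real.sqrt (1 + ‖y‖ ^ 2) := lt_of_lt_of_le one_pos hSy1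
  have hSx0 : (0:ℝ) < Real.sqrt (1 + ‖x‖ ^ 2) := lt_of_lt_of_le one_pos hSx1
  have hmn : ‖y‖ ≤ ‖x‖ + Cu := by
    calc ‖y‖ = ‖x + u x‖ := by rw [hy]
      _ ≤ ‖x‖ + ‖u x‖ := norm_add_le _ _
      _ ≤ ‖x‖ + Cu := by have := hCu x; linarith
  have hnm : ‖x‖ ≤ ‖y‖ + Cu := by
    have hx' : x = y - u x := by rw [← hy]; abel
    calc ‖x‖ = ‖y - u x‖ := by rw [← hx']
      _ ≤ ‖y‖ + ‖u x‖ := norm_sub_le _ _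
      _ ≤ ‖y‖ + Cu := by have := hCu x; linarith
  have hmθn : ‖y‖ ^ ϑ ≤ 2 ^ ϑ * (‖x‖ ^ ϑ + Cu ^ ϑ) :=
    le_trans (Real.rpow_le_rpow hm0 hmn hϑ0) (rpow_add_le_aux hn0 hCu0 hϑ0)
  have hnθm : ‖x‖ ^ ϑ ≤ 2 ^ ϑ * (‖y‖ ^ ϑ + Cu ^ ϑ) :=
    le_trans (Real.rpow_le_rpow hn0 hnm hϑ0) (rpow_add_le_aux hm0 hCu0 hϑ0)
  have hfd : fderiv ℝ (fun x => x + u x) x (b1 x) = b1 x + fderiv ℝ u x (b1 x) := by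
    rw [fderiv_fun_add differentiableAt_fun_id (hud x)]
    simp [fderiv_id']
  have hv : ‖b1 x‖ ≤ κ₂ * (1 + ‖x‖ ^ ϑ) := hb2 x
  have hw : ‖fderiv ℝ u x (b1 x)‖ ≤ ε * (κ₂ * (1 + ‖x‖ ^ ϑ)) := by
    calc ‖fderiv ℝ u x (b1 x)‖ ≤ ‖fderiv ℝ u x‖ * ‖b1 x‖ := (fderiv ℝ u x).le_opNorm _
      _ ≤ ε * (κ₂ * (1 + ‖x‖ ^ ϑ)) := mul_le_mul (hDu x) hv (norm_nonneg _) hε0.le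
  have hySy : ‖y‖ ≤ Real.sqrt (1 + ‖y‖ ^ 2) := hmSy
  have h1 : ⟪y, u x⟫ ≤ Real.sqrt (1 + ‖y‖ ^ 2) * Cu :=
    le_trans (real_inner_le_norm y (u x))
      (mul_le_mul hySy (hCu x) (norm_nonneg _) (le_trans hm0 hySy))
  have h2 : ⟪x, b1 x⟫ ≤ (-κ₀ * ‖x‖ ^ ϑ + κ₁) * Real.sqrt (1 + ‖x‖ ^ 2) := by
    have := hb1 x
    rw [div_le_iff₀ hSx0] at this
    exact this
  have h3 : ⟪u x, b1 x⟫ ≤ Cu * (κ₂ * (1 + ‖x‖ ^ ϑ)) :=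
    le_trans (real_inner_le_norm (u x) (b1 x))
      (mul_le_mul (hCu x) hv (norm_nonneg _) hCu0)
  have h4 : ⟪y, fderiv ℝ u x (b1 x)⟫ ≤
      Real.sqrt (1 + ‖y‖ ^ 2) * (ε * (κ₂ * (1 + ‖x‖ ^ ϑ))) :=
    le_trans (real_inner_le_norm y _)
      (mul_le_mul hySy hw (norm_nonneg _) (le_trans hm0 hySy))
  have hexp : ⟪y, lam • u x + (b1 x + fderiv ℝ u x (b1 x))⟫ =
      lam * ⟪y, u x⟫ + (⟪x, b1 x⟫ + ⟪u x, b1 x⟫) + ⟪y, fderiv ℝ u x (b1 x)⟫ := by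
    rw [inner_add_right, inner_add_right, real_inner_smul_right]
    have h : ⟪y, b1 x⟫ = ⟪x, b1 x⟫ + ⟪u x, b1 x⟫ := by rw [← hy, inner_add_left]
    rw [h]; ring
  have hsm : ‖lam • u x‖ = lam * ‖u x‖ := by
    rw [norm_smul, Real.norm_eq_abs, abs_of_pos hlam]
  constructor
  · rw [div_le_iff₀ hSy0, hfd, hexp]
    exact key_inner ϑ κ₀ κ₁ κ₂ ε lam Cu ‖x‖ ‖y‖ _ _ _ _ _ _
      hϑ0 hκ₀ hκ₁ hκ₂ hlam hCu0 hε0 hεκ hn0 hm0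
      hSx1 hnSx hSxn hSy1 hmSy hSym hSx2 hSy2 hmn hnm hmθn hnθ hmθ hCup h1 h2 h3 h4
  · rw [hfd]
    have hn1 : ‖lam • u x + (b1 x + fderiv ℝ u x (b1 x))‖ ≤
        lam * Cu + (κ₂ * (1 + ‖x‖ ^ ϑ) + ε * (κ₂ * (1 + ‖x‖ ^ ϑ))) := by
      calc ‖lam • u x + (b1 x + fderiv ℝ u x (b1 x))‖
          ≤ ‖lam • u x‖ + (‖b1 x‖ + ‖fderiv ℝ u x (b1 x)‖) :=
            le_trans (norm_add_le _ _) (by gcongr; exact norm_add_le _ _)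
        _ ≤ lam * Cu + (κ₂ * (1 + ‖x‖ ^ ϑ) + ε * (κ₂ * (1 + ‖x‖ ^ ϑ))) := by
            rw [hsm]
            exact add_le_add (mul_le_mul_of_nonneg_left (hCu x) hlam.le) (add_le_add hv hw)
    exact key_norm ϑ κ₂ ε lam Cu ‖x‖ ‖y‖ _
      hϑ0 hκ₂ hlam hCu0 hε0 hε1 hn0 hm0 hnθm hnθ hmθ hCup hn1
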